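/- Fix N ≥ 2, δ > 0 and for each i = 1,…,N constants αᵢ, βᵢ > 0 and reference values rᵢ* ∈ (0, αᵢβᵢ/δ) satisfying Σ_{j≠i} δrⱼ*/(αⱼβⱼ − δrⱼ*) < 1 − ϑ for all i, for some ϑ ∈ (0,1). Suppose functions ηᵢ : ℝ≥0 → ℝ satisfy 0 < ηᵢ(w) ≤ ηᵢ* + kᵢεᵢ for all w ≥ 0, where ηᵢ* = δrᵢ*/(αᵢβᵢ − δrᵢ*), kᵢ ≥ 0, and the εᵢ > 0 are small enough that Σ_{j≠i}(ηⱼ* + kⱼεⱼ) ≤ 1 − ϑ for all i. Then the discrete-time system wᵢ(k+1) = Σ_{j≠i} ηⱼ(wⱼ(k))(1 + wⱼ(k)), with wᵢ(0) ≥ 0, satisfies: V(k) := max_i wᵢ(k)² obeys V(k+1) − V(k) ≤ −(ϑ/2)V(k) whenever max_i wᵢ(k) ≥ w* := max(1, 6(1−ϑ)/ϑ). Consequently every trajectory is ultimately bounded in [0, w*]^N. -/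

import Mathlib

/-- Lyapunov decrease and ultimate boundedness for the
resource-competition fixed-point iteration
`wᵢ(k+1) = Σ_{j≠i} ηⱼ(wⱼ(k))(1 + wⱼ(k))` (Proposition 1). -/
theorem resource_competition_ultimate_boundedness
    (N : ℕ) (hN : 2 ≤ N) (δ ϑ : ℝ) (hδ : 0 < δ) (hϑ : ϑ ∈ Set.Ioo (0:ℝ) 1)
    (α β rstar kconst ε : Fin N → ℝ) (η : Fin N → ℝ → ℝ)
    (hα : ∀ i, 0 < α i) (hβ : ∀ i, 0 < β i)
    (hrs : ∀ i, rstar i ∈ Set.Ioo 0 (α i * β i / δ))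
    (hkc : ∀ i, 0 ≤ kconst i) (hε : ∀ i, 0 < ε i)
    (hsum₀ : ∀ i, ∑ j ∈ Finset.univ.erase i,
        δ * rstar j / (α j * β j - δ * rstar j) < 1 - ϑ)
    (hsum : ∀ i, ∑ j ∈ Finset.univ.erase i,
        (δ * rstar j / (α j * β j - δ * rstar j) + kconst j * ε j) ≤ 1 - ϑ)
    (hη : ∀ i w, 0 ≤ w →
        0 < η i w ∧
        η i w ≤ δ * rstar i / (α i * β i - δ * rstar i) + kconst i * ε i)
    (w : ℕ → Fin N → ℝ) (hw0 : ∀ i, 0 ≤ w 0 i)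
    (hiter : ∀ k i, w (k + 1) i =
        ∑ j ∈ Finset.univ.erase i, η j (w k j) * (1 + w k j)) :
    let wstarbd : ℝ := max 1 (6 * (1 - ϑ) / ϑ)
    (∀ k, wstarbd ≤ ‖w k‖ →
      ‖w (k + 1)‖ ^ 2 - ‖w k‖ ^ 2 ≤ -(ϑ / 2) * ‖w k‖ ^ 2) ∧
    (∃ kstar : ℕ, ∀ k ≥ kstar, ∀ i, w k i ∈ Set.Icc 0 wstarbd) := by

  obtain ⟨hϑ0, hϑ1⟩ := hϑ
  have hpos : ∀ k i, 0 ≤ w k i := by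
    intro k
    induction k with
    | zero => exact hw0
    | succ k ih =>
      intro i
      rw [hiter k i]
      apply Finset.sum_nonneg
      intro j _
      have h1 := (hη j (w k j) (ih j)).1
      have h2 : 0 ≤ 1 + w k j := by linarith [ih j]
      exact mul_nonneg h1.le h2
  have hBnn : ∀ j, 0 ≤ δ * rstar j / (α j * β j - δ * rstar j) + kconst j * ε j := by
    intro j
    have := hη j 0 le_rfl
    linarith [this.1, this.2]
  have hnormnn : ∀ k, 0 ≤ ‖w k‖ := fun k => norm_nonneg _
  have hcomp : ∀ k i, w k i ≤ ‖w k‖ := by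
    intro k i
    refine le_trans (le_abs_self _) ?_
    simpa using norm_le_pi_norm (w k) i
  have hstep : ∀ k, ‖w (k + 1)‖ ≤ (1 - ϑ) * (1 + ‖w k‖) := by
    intro k
    have hr : 0 ≤ (1 - ϑ) * (1 + ‖w k‖) := by nlinarith [hnormnn k]
    rw [pi_norm_le_iff_of_nonneg hr]
    intro i
    rw [Real.norm_eq_abs, abs_of_nonneg (hpos (k + 1) i), hiter k i]
    calc ∑ j ∈ Finset.univ.erase i, η j (w k j) * (1 + w k j)
        ≤ ∑ j ∈ Finset.univ.erase i,
            (δ * rstar j / (α j * β j - δ * rstar j) + kconst j * ε j) * (1 + ‖w k‖) := by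
          apply Finset.sum_le_sum
          intro j _
          have h1 := hη j (w k j) (hpos k j)
          have h2 := hcomp k j
          have h3 : 0 ≤ 1 + w k j := by linarith [hpos k j]
          exact mul_le_mul h1.2 (by linarith) h3 (hBnn j)
      _ = (∑ j ∈ Finset.univ.erase i,
            (δ * rstar j / (α j * β j - δ * rstar j) + kconst j * ε j)) * (1 + ‖w k‖) :=
          (Finset.sum_mul _ _ _).symm
      _ ≤ (1 - ϑ) * (1 + ‖w k‖) :=
          mul_le_mul_of_nonneg_right (hsum i) (by linarith [hnormnn k])
  intro wstarbd
  have hws1 : (1:ℝ) ≤ wstarbd := le_max_left _ _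
  have hws6 : 6 * (1 - ϑ) / ϑ ≤ wstarbd := le_max_right _ _
  have hws6' : 6 * (1 - ϑ) ≤ ϑ * wstarbd := by
    rw [div_le_iff₀ hϑ0] at hws6; linarith
  have hdecr : ∀ k, wstarbd ≤ ‖w k‖ →
      ‖w (k + 1)‖ ^ 2 - ‖w k‖ ^ 2 ≤ -(ϑ / 2) * ‖w k‖ ^ 2 := by
    intro k hk
    have hM1 : 1 ≤ ‖w k‖ := le_trans hws1 hk
    have hM6 : 6 * (1 - ϑ) ≤ ϑ * ‖w k‖ := le_trans hws6' (by nlinarith)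
    have h1 := hstep k
    have h2 := hnormnn (k + 1)
    have h4 : ‖w (k + 1)‖ ≤ (1 - 5 * ϑ / 6) * ‖w k‖ := by nlinarith
    have h5 : ‖w (k + 1)‖ ^ 2 ≤ ((1 - 5 * ϑ / 6) * ‖w k‖) ^ 2 := by
      exact pow_le_pow_left₀ h2 h4 2
    nlinarith [h5, mul_nonneg (show (0:ℝ) ≤ 7 * ϑ / 6 - 25 * ϑ ^ 2 / 36 by nlinarith)
      (sq_nonneg ‖w k‖)]
  have hinv : ∀ k, ‖w k‖ ≤ wstarbd → ‖w (k + 1)‖ ≤ wstarbd := by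
    intro k hk
    have h1 := hstep k
    have h2 := hnormnn k
    nlinarith
  have hex : ∃ k, ‖w k‖ ≤ wstarbd := by
    by_contra h
    push_neg at h
    have hV : ∀ n, ‖w n‖ ^ 2 ≤ (1 - ϑ / 2) ^ n * ‖w 0‖ ^ 2 := by
      intro n
      induction n with
      | zero => simp
      | succ n ih =>
        have hd := hdecr n (h n).le
        calc ‖w (n + 1)‖ ^ 2 ≤ (1 - ϑ / 2) * ‖w n‖ ^ 2 := by linarith
          _ ≤ (1 - ϑ / 2) * ((1 - ϑ / 2) ^ n * ‖w 0‖ ^ 2) :=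
              mul_le_mul_of_nonneg_left ih (by linarith)
          _ = (1 - ϑ / 2) ^ (n + 1) * ‖w 0‖ ^ 2 := by ring
    obtain ⟨n, hn⟩ := exists_pow_lt_of_lt_one
      (show (0:ℝ) < 1 / (‖w 0‖ ^ 2 + 1) by positivity)
      (show 1 - ϑ / 2 < 1 by linarith)
    have hn' : (1 - ϑ / 2) ^ n * (‖w 0‖ ^ 2 + 1) < 1 := by
      have := (lt_div_iff₀ (show (0:ℝ) < ‖w 0‖ ^ 2 + 1 by positivity)).mp hn
      linarith
    have hp : (0:ℝ) ≤ (1 - ϑ / 2) ^ n := pow_nonneg (by linarith) n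
    have h1 : ‖w n‖ ^ 2 < 1 := by nlinarith [hV n]
    have h2 : wstarbd < ‖w n‖ := h n
    nlinarith
  obtain ⟨kstar, hk⟩ := hex
  have hall : ∀ k, kstar ≤ k → ‖w k‖ ≤ wstarbd := by
    intro k hkk
    induction k, hkk using Nat.le_induction with
    | base => exact hk
    | succ n _ ih => exact hinv n ih
  refine ⟨hdecr, kstar, ?_⟩
  intro k hkk i
  exact ⟨hpos k i, le_trans (hcomp k i) (hall k hkk)⟩
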